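/- Δ ∖ (E ∪ F) is a single orbit of G = SL(2,ℂ): any two points of Δ lying in neither E nor F lie in the same G-orbit. -/

import Mathlib

open Matrix

/-- A point of `ℙ¹ × ℙ¹ × ℙ²` in homogeneous coordinates: `x, y` are nonzero vectors in `ℂ²`
(homogeneous coordinates on the two `ℙ¹`-factors) and `z` is a nonzero symmetric `2×2` complex
matrix (homogeneous coordinates `[z₀:z₁:z₂]` on `ℙ²`, the projectivized symmetric matrices,
via `z = [[z₀,z₁],[z₁,z₂]]`). -/
structure ProjPoint where
  x : Fin 2 → ℂ
  y : Fin 2 → ℂ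
  z : Matrix (Fin 2) (Fin 2) ℂ
  hx : x ≠ 0
  hy : y ≠ 0
  hz : z ≠ 0
  hzsymm : zᵀ = z

/-- Membership in the threefold `X`:
`x₀y₀z₂ + x₁y₁z₀ − x₀y₁z₁ − x₁y₀z₁ = 0`. -/
def onX (p : ProjPoint) : Prop :=
  p.x 0 * p.y 0 * p.z 1 1 + p.x 1 * p.y 1 * p.z 0 0
    - p.x 0 * p.y 1 * p.z 0 1 - p.x 1 * p.y 0 * p.z 0 1 = 0

/-- Membership in `Δ = X ∩ {x₀y₁ − x₁y₀ = 0}`. -/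
def memDelta (p : ProjPoint) : Prop := p.x 0 * p.y 1 - p.x 1 * p.y 0 = 0

/-- Membership in `E = X ∩ {x₁z₀ − x₀z₁ = 0, x₁z₁ − x₀z₂ = 0}`. -/
def memE (p : ProjPoint) : Prop :=
  p.x 1 * p.z 0 0 - p.x 0 * p.z 0 1 = 0 ∧ p.x 1 * p.z 0 1 - p.x 0 * p.z 1 1 = 0

/-- Membership in `F = X ∩ {y₁z₀ − y₀z₁ = 0, y₀z₂ − y₁z₁ = 0}`. -/
def memF (p : ProjPoint) : Prop :=
  p.y 1 * p.z 0 0 - p.y 0 * p.z 0 1 = 0 ∧ p.y 0 * p.z 1 1 - p.y 1 * p.z 0 1 = 0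

/-- Two points of `ℙ¹ × ℙ¹ × ℙ²` lie in the same orbit of the diagonal `SL(2,ℂ)`-action, where
`SL(2,ℂ)` acts standardly on each `ℙ¹`-factor and by `g·[M] := [g M gᵀ]` on `ℙ²`. -/
def sameOrbit (p q : ProjPoint) : Prop :=
  ∃ g : Matrix.SpecialLinearGroup (Fin 2) ℂ, ∃ a b c : ℂ,
    a ≠ 0 ∧ b ≠ 0 ∧ c ≠ 0 ∧
    (g : Matrix (Fin 2) (Fin 2) ℂ) *ᵥ p.x = a • q.x ∧
    (g : Matrix (Fin 2) (Fin 2) ℂ) *ᵥ p.y = b • q.y ∧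
    (g : Matrix (Fin 2) (Fin 2) ℂ) * p.z * (g : Matrix (Fin 2) (Fin 2) ℂ)ᵀ = c • q.z

/-! Auxiliary lemmas -/

lemma vec2_eq_zero {u : Fin 2 → ℂ} (h0 : u 0 = 0) (h1 : u 1 = 0) : u = 0 := by
  funext i; fin_cases i <;> simpa

lemma prop_vec {u v : Fin 2 → ℂ} (hu : u ≠ 0) (hv : v ≠ 0)
    (h : u 0 * v 1 - u 1 * v 0 = 0) : ∃ μ : ℂ, μ ≠ 0 ∧ u = μ • v := by
  by_cases hv0 : v 0 = 0
  · have hv1 : v 1 ≠ 0 := fun h1 => hv (vec2_eq_zero hv0 h1)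
    have hu0 : u 0 = 0 := by
      have : u 0 * v 1 = 0 := by rw [sub_eq_zero] at h; rw [h, hv0]; ring
      exact (mul_eq_zero.mp this).resolve_right hv1
    have hu1 : u 1 ≠ 0 := fun h1 => hu (vec2_eq_zero hu0 h1)
    refine ⟨u 1 / v 1, div_ne_zero hu1 hv1, ?_⟩
    funext i; fin_cases i
    · simp [hu0, hv0]
    · simp; field_simp
  · have hu0 : u 0 ≠ 0 := by
      intro h0
      have : u 1 * v 0 = 0 := by rw [sub_eq_zero] at h; rw [← h, h0]; ring
      exact hu (vec2_eq_zero h0 ((mul_eq_zero.mp this).resolve_right hv0))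
    refine ⟨u 0 / v 0, div_ne_zero hu0 hv0, ?_⟩
    funext i; fin_cases i
    · simp; field_simp
    · simp
      have := sub_eq_zero.mp h
      field_simp
      linear_combination -this

/-- From data `v` with `x vᵀ + v xᵀ = z` and `x₀v₁ - x₁v₀ ≠ 0`, build the group element
moving the standard point to `p`. -/
lemma build (p : ProjPoint) (μ : ℂ) (hμ0 : μ ≠ 0) (hμ : p.x = μ • p.y)
    (v0 v1 : ℂ) (h00 : 2 * (p.x 0 * v0) = p.z 0 0)
    (h01 : p.x 0 * v1 + p.x 1 * v0 = p.z 0 1)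
    (h11 : 2 * (p.x 1 * v1) = p.z 1 1)
    (hd : p.x 0 * v1 - p.x 1 * v0 ≠ 0) :
    ∃ g : Matrix.SpecialLinearGroup (Fin 2) ℂ, ∃ a b c : ℂ,
      a ≠ 0 ∧ b ≠ 0 ∧ c ≠ 0 ∧
      (g : Matrix (Fin 2) (Fin 2) ℂ) *ᵥ ![1, 0] = a • p.x ∧
      (g : Matrix (Fin 2) (Fin 2) ℂ) *ᵥ ![1, 0] = b • p.y ∧
      (g : Matrix (Fin 2) (Fin 2) ℂ) * !![(0:ℂ), 1; 1, 0] * (g : Matrix (Fin 2) (Fin 2) ℂ)ᵀ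
        = c • p.z := by
  obtain ⟨s, hs⟩ := IsAlgClosed.exists_pow_nat_eq (k := ℂ) (p.x 0 * v1 - p.x 1 * v0)⁻¹ two_pos
  have hs0 : s ≠ 0 := by
    intro h
    rw [h] at hs
    simp at hs
    exact hd hs.symm
  have hdet1 : s ^ 2 * (p.x 0 * v1 - p.x 1 * v0) = 1 := by
    rw [hs]; exact inv_mul_cancel₀ hd
  have hsym : p.z 1 0 = p.z 0 1 := by
    have h := congrFun (congrFun p.hzsymm 0) 1
    simp only [Matrix.transpose_apply] at h
    exact h
  have hdet : (!![s * p.x 0, s * v0; s * p.x 1, s * v1]).det = 1 := by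
    rw [Matrix.det_fin_two_of]
    linear_combination hdet1
  have hMT : (!![s * p.x 0, s * v0; s * p.x 1, s * v1])ᵀ
      = !![s * p.x 0, s * p.x 1; s * v0, s * v1] := by
    ext i j; fin_cases i <;> fin_cases j <;> rfl
  refine ⟨⟨!![s * p.x 0, s * v0; s * p.x 1, s * v1], hdet⟩, s, s * μ, s ^ 2,
    hs0, mul_ne_zero hs0 hμ0, pow_ne_zero 2 hs0, ?_, ?_, ?_⟩
  · show !![s * p.x 0, s * v0; s * p.x 1, s * v1] *ᵥ ![1, 0] = s • p.x
    funext i; fin_cases i <;>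
      simp [Matrix.mulVec, dotProduct, Fin.sum_univ_two] <;> ring
  · have e0 := congrFun hμ 0
    have e1 := congrFun hμ 1
    simp only [Pi.smul_apply, smul_eq_mul] at e0 e1
    show !![s * p.x 0, s * v0; s * p.x 1, s * v1] *ᵥ ![1, 0] = (s * μ) • p.y
    funext i; fin_cases i <;>
      simp [Matrix.mulVec, dotProduct, Fin.sum_univ_two]
    · linear_combination s * e0
    · linear_combination s * e1
  · show !![s * p.x 0, s * v0; s * p.x 1, s * v1] * !![(0:ℂ), 1; 1, 0]
        * (!![s * p.x 0, s * v0; s * p.x 1, s * v1])ᵀ = s ^ 2 • p.z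
    rw [hMT]
    ext i j
    fin_cases i <;> fin_cases j <;>
      simp [Matrix.mul_apply, Fin.sum_univ_two]
    · linear_combination s ^ 2 * h00
    · linear_combination s ^ 2 * h01
    · linear_combination s ^ 2 * h01 - s ^ 2 * hsym
    · linear_combination s ^ 2 * h11

lemma key (p : ProjPoint) (hp : onX p) (hpD : memDelta p) (hpE : ¬ memE p) :
    ∃ g : Matrix.SpecialLinearGroup (Fin 2) ℂ, ∃ a b c : ℂ,
      a ≠ 0 ∧ b ≠ 0 ∧ c ≠ 0 ∧
      (g : Matrix (Fin 2) (Fin 2) ℂ) *ᵥ ![1, 0] = a • p.x ∧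
      (g : Matrix (Fin 2) (Fin 2) ℂ) *ᵥ ![1, 0] = b • p.y ∧
      (g : Matrix (Fin 2) (Fin 2) ℂ) * !![(0:ℂ), 1; 1, 0] * (g : Matrix (Fin 2) (Fin 2) ℂ)ᵀ
        = c • p.z := by
  have hp : p.x 0 * p.y 0 * p.z 1 1 + p.x 1 * p.y 1 * p.z 0 0
      - p.x 0 * p.y 1 * p.z 0 1 - p.x 1 * p.y 0 * p.z 0 1 = 0 := hp
  have hpD : p.x 0 * p.y 1 - p.x 1 * p.y 0 = 0 := hpD
  obtain ⟨μ, hμ0, hμ⟩ := prop_vec p.hx p.hy hpD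
  have e0 := congrFun hμ 0
  have e1 := congrFun hμ 1
  simp only [Pi.smul_apply, smul_eq_mul] at e0 e1
  have hC : p.x 0 ^ 2 * p.z 1 1 + p.x 1 ^ 2 * p.z 0 0
      - 2 * (p.x 0 * p.x 1 * p.z 0 1) = 0 := by
    linear_combination μ * hp + (p.x 0 * p.z 1 1 - p.x 1 * p.z 0 1) * e0
      + (p.x 1 * p.z 0 0 - p.x 0 * p.z 0 1) * e1
  have hD : p.z 0 0 * p.z 1 1 - p.z 0 1 ^ 2 ≠ 0 := by
    intro h
    apply hpE
    have hA2 : (p.x 1 * p.z 0 0 - p.x 0 * p.z 0 1) ^ 2 = 0 := by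
      linear_combination p.z 0 0 * hC - p.x 0 ^ 2 * h
    have hB2 : (p.x 1 * p.z 0 1 - p.x 0 * p.z 1 1) ^ 2 = 0 := by
      linear_combination p.z 1 1 * hC - p.x 1 ^ 2 * h
    exact ⟨pow_eq_zero_iff two_ne_zero |>.mp hA2,
      pow_eq_zero_iff two_ne_zero |>.mp hB2⟩
  by_cases hx0 : p.x 0 = 0
  · have hx1 : p.x 1 ≠ 0 := fun h1 => p.hx (vec2_eq_zero hx0 h1)
    have hB : p.x 1 * p.z 0 1 - p.x 0 * p.z 1 1 ≠ 0 := by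
      intro h
      apply hD
      have h2 : p.x 1 ^ 2 * (p.z 0 0 * p.z 1 1 - p.z 0 1 ^ 2) = 0 := by
        linear_combination p.z 1 1 * hC - (p.x 1 * p.z 0 1 - p.x 0 * p.z 1 1) * h
      exact (mul_eq_zero.mp h2).resolve_left (pow_ne_zero 2 hx1)
    refine build p μ hμ0 hμ
      ((2 * p.x 1 * p.z 0 1 - p.x 0 * p.z 1 1) / (2 * p.x 1 ^ 2))
      (p.z 1 1 / (2 * p.x 1)) ?_ ?_ ?_ ?_
    · field_simp
      linear_combination (-1 : ℂ) * hC
    · field_simp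
      ring
    · field_simp
    · have heq : p.x 0 * (p.z 1 1 / (2 * p.x 1))
          - p.x 1 * ((2 * p.x 1 * p.z 0 1 - p.x 0 * p.z 1 1) / (2 * p.x 1 ^ 2))
          = (p.x 0 * p.z 1 1 - p.x 1 * p.z 0 1) / p.x 1 := by
        field_simp
        ring
      rw [heq]
      apply div_ne_zero _ hx1
      intro h
      apply hB
      linear_combination -h
  · have hA : p.x 0 * p.z 0 1 - p.x 1 * p.z 0 0 ≠ 0 := by
      intro h
      apply hD
      have h2 : p.x 0 ^ 2 * (p.z 0 0 * p.z 1 1 - p.z 0 1 ^ 2) = 0 := by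
        linear_combination p.z 0 0 * hC + (p.x 1 * p.z 0 0 - p.x 0 * p.z 0 1) * h
      exact (mul_eq_zero.mp h2).resolve_left (pow_ne_zero 2 hx0)
    refine build p μ hμ0 hμ
      (p.z 0 0 / (2 * p.x 0))
      ((2 * p.x 0 * p.z 0 1 - p.x 1 * p.z 0 0) / (2 * p.x 0 ^ 2)) ?_ ?_ ?_ ?_
    · field_simp
    · field_simp
      ring
    · field_simp
      linear_combination (-1 : ℂ) * hC
    · have heq : p.x 0 * ((2 * p.x 0 * p.z 0 1 - p.x 1 * p.z 0 0) / (2 * p.x 0 ^ 2))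
          - p.x 1 * (p.z 0 0 / (2 * p.x 0))
          = (p.x 0 * p.z 0 1 - p.x 1 * p.z 0 0) / p.x 0 := by
        field_simp
        ring
      rw [heq]
      exact div_ne_zero hA hx0

/-- **Statement 13.** `Δ ∖ (E ∪ F)` is a single orbit of `G = SL(2,ℂ)`: any two points of `Δ`
lying in neither `E` nor `F` lie in the same `G`-orbit. -/
theorem delta_minus_EF_single_orbit (p q : ProjPoint) (hp : onX p) (hq : onX q)
    (hpD : memDelta p) (hpE : ¬ memE p) (hpF : ¬ memF p)
    (hqD : memDelta q) (hqE : ¬ memE q) (hqF : ¬ memF q) :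
    sameOrbit p q := by
  obtain ⟨g₁, a₁, b₁, c₁, ha₁, hb₁, hc₁, h1x, h1y, h1z⟩ := key p hp hpD hpE
  obtain ⟨g₂, a₂, b₂, c₂, ha₂, hb₂, hc₂, h2x, h2y, h2z⟩ := key q hq hqD hqE
  set A : Matrix (Fin 2) (Fin 2) ℂ := (g₁ : Matrix (Fin 2) (Fin 2) ℂ) with hA
  set A' : Matrix (Fin 2) (Fin 2) ℂ := ((g₁⁻¹ : Matrix.SpecialLinearGroup (Fin 2) ℂ) :
    Matrix (Fin 2) (Fin 2) ℂ) with hA'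
  set B : Matrix (Fin 2) (Fin 2) ℂ := (g₂ : Matrix (Fin 2) (Fin 2) ℂ) with hB
  have hA'A : A' * A = 1 := by
    rw [hA', hA, ← Matrix.SpecialLinearGroup.coe_mul, inv_mul_cancel,
      Matrix.SpecialLinearGroup.coe_one]
  have hAtA't : Aᵀ * A'ᵀ = 1 := by
    rw [← Matrix.transpose_mul, hA'A, Matrix.transpose_one]
  refine ⟨g₂ * g₁⁻¹, a₂ * a₁⁻¹, b₂ * b₁⁻¹, c₂ * c₁⁻¹,
    mul_ne_zero ha₂ (inv_ne_zero ha₁), mul_ne_zero hb₂ (inv_ne_zero hb₁),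
    mul_ne_zero hc₂ (inv_ne_zero hc₁), ?_, ?_, ?_⟩
  · have hx' : A' *ᵥ p.x = a₁⁻¹ • ![1, 0] := by
      have h := congrArg (fun v => A' *ᵥ v) h1x
      simp only [Matrix.mulVec_mulVec, hA'A, Matrix.one_mulVec, Matrix.mulVec_smul] at h
      rw [h, smul_smul, inv_mul_cancel₀ ha₁, one_smul]
    rw [Matrix.SpecialLinearGroup.coe_mul, ← hA', ← hB, ← Matrix.mulVec_mulVec, hx',
      Matrix.mulVec_smul, h2x, smul_smul, mul_comm]
  · have hy' : A' *ᵥ p.y = b₁⁻¹ • ![1, 0] := by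
      have h := congrArg (fun v => A' *ᵥ v) h1y
      simp only [Matrix.mulVec_mulVec, hA'A, Matrix.one_mulVec, Matrix.mulVec_smul] at h
      rw [h, smul_smul, inv_mul_cancel₀ hb₁, one_smul]
    rw [Matrix.SpecialLinearGroup.coe_mul, ← hA', ← hB, ← Matrix.mulVec_mulVec, hy',
      Matrix.mulVec_smul, h2y, smul_smul, mul_comm]
  · have hz' : A' * p.z * A'ᵀ = c₁⁻¹ • !![(0:ℂ), 1; 1, 0] := by
      have e : A' * (A * !![(0:ℂ), 1; 1, 0] * Aᵀ) * A'ᵀ = !![(0:ℂ), 1; 1, 0] := by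
        calc A' * (A * !![(0:ℂ), 1; 1, 0] * Aᵀ) * A'ᵀ
            = (A' * A) * !![(0:ℂ), 1; 1, 0] * (Aᵀ * A'ᵀ) := by
              simp only [Matrix.mul_assoc]
          _ = !![(0:ℂ), 1; 1, 0] := by rw [hA'A, hAtA't, one_mul, mul_one]
      rw [h1z] at e
      rw [Matrix.mul_smul, Matrix.smul_mul] at e
      rw [← e, smul_smul, inv_mul_cancel₀ hc₁, one_smul]
    rw [Matrix.SpecialLinearGroup.coe_mul, Matrix.transpose_mul]
    calc B * A' * p.z * (A'ᵀ * Bᵀ) = B * (A' * p.z * A'ᵀ) * Bᵀ := by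
          simp only [Matrix.mul_assoc]
      _ = c₁⁻¹ • (B * !![(0:ℂ), 1; 1, 0] * Bᵀ) := by
          rw [hz', Matrix.mul_smul, Matrix.smul_mul]
      _ = (c₂ * c₁⁻¹) • q.z := by rw [h2z, smul_smul, mul_comm]
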